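/- If P(z) and P(z') are integral generalized permutahedra in ℝ^n (all vertices are lattice points), then every lattice point of the Minkowski sum P(z)+P(z') is a sum of a lattice point of P(z) and a lattice point of P(z'): (P(z) ∩ ℤ^n) + (P(z') ∩ ℤ^n) = (P(z)+P(z')) ∩ ℤ^n. -/

import Mathlib

open Finset
open scoped Pointwise

/-- A submodular function on subsets of `[n]`. -/
def Submodular {n : ℕ} (z : Finset (Fin n) → ℝ) : Prop :=
  z ∅ = 0 ∧ ∀ I J : Finset (Fin n), z (I ∪ J) + z (I ∩ J) ≤ z I + z J

/-- The generalized permutahedron associated to `z`. -/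
def GenPerm {n : ℕ} (z : Finset (Fin n) → ℝ) : Set (Fin n → ℝ) :=
  {t | (∀ I : Finset (Fin n), I ≠ univ → ∑ i ∈ I, t i ≤ z I) ∧ ∑ i, t i = z univ}

/-- The lattice points of `ℝ^n`. -/
def LatticePts (n : ℕ) : Set (Fin n → ℝ) :=
  {t | ∀ i, ∃ m : ℤ, t i = m}





namespace GPAux

attribute [local instance] Classical.propDecidable

variable {n : ℕ}

/-- Sum of coordinates of `x` over `I`. -/
def ssum (x : Fin n → ℝ) (I : Finset (Fin n)) : ℝ := ∑ i ∈ I, x i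

/-- Indicator vector of `I`. -/
def ind (I : Finset (Fin n)) : Fin n → ℝ := fun i => if i ∈ I then 1 else 0

lemma ssum_union_inter (x : Fin n → ℝ) (I J : Finset (Fin n)) :
    ssum x (I ∪ J) + ssum x (I ∩ J) = ssum x I + ssum x J := Finset.sum_union_inter

lemma ssum_empty (x : Fin n → ℝ) : ssum x ∅ = 0 := rfl

/-- The dot-product functional. -/
def dot (d : Fin n → ℝ) : (Fin n → ℝ) →ₗ[ℝ] ℝ where
  toFun v := ∑ i, v i * d i
  map_add' u v := by simp [add_mul, Finset.sum_add_distrib]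
  map_smul' c v := by simp [Finset.mul_sum, mul_assoc]

lemma dot_apply (d v : Fin n → ℝ) : dot d v = ∑ i, v i * d i := rfl

lemma dot_ind (d : Fin n → ℝ) (I : Finset (Fin n)) : dot d (ind I) = ssum d I := by
  rw [dot_apply]
  simp only [ind, ite_mul, one_mul, zero_mul]
  rw [Finset.sum_ite_mem, Finset.univ_inter]
  rfl

/-- Feasibility for the sandwich system. -/
def Feas (a b : Finset (Fin n) → ℝ) (x : Fin n → ℝ) : Prop :=
  ∀ I, a I ≤ ssum x I ∧ ssum x I ≤ b I

/-- Indicators of tight constraints. -/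
def TightInd (a b : Finset (Fin n) → ℝ) (x : Fin n → ℝ) : Set (Fin n → ℝ) :=
  {v | ∃ I : Finset (Fin n), (ssum x I = b I ∨ ssum x I = a I) ∧ v = ind I}

noncomputable def Vx (a b : Finset (Fin n) → ℝ) (x : Fin n → ℝ) : Submodule ℝ (Fin n → ℝ) :=
  Submodule.span ℝ (TightInd a b x)

lemma improve (a b : Finset (Fin n) → ℝ) (x : Fin n → ℝ) (hx : Feas a b x)
    (hne : Vx a b x ≠ ⊤) :
    ∃ x', Feas a b x' ∧
      Module.finrank ℝ (Vx a b x) < Module.finrank ℝ (Vx a b x') := by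
  obtain ⟨v, hv⟩ : ∃ v, v ∉ Vx a b x := by
    by_contra h; push_neg at h; exact hne (Submodule.eq_top_iff'.mpr h)
  have hmkv : (Vx a b x).mkQ v ≠ 0 := by
    simpa [Submodule.mkQ_apply, Submodule.Quotient.mk_eq_zero] using hv
  obtain ⟨g, hg⟩ : ∃ g : Module.Dual ℝ ((Fin n → ℝ) ⧸ Vx a b x), g ((Vx a b x).mkQ v) ≠ 0 := by
    by_contra h; push_neg at h
    exact hmkv ((Module.forall_dual_apply_eq_zero_iff ℝ _).mp h)
  set f : (Fin n → ℝ) →ₗ[ℝ] ℝ := g.comp (Vx a b x).mkQ with hf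
  set d : Fin n → ℝ := fun i => f (Pi.single i 1) with hd
  have hfd : ∀ w, f w = dot d w := by
    intro w
    have hw : w = ∑ i, w i • (Pi.single i (1:ℝ) : Fin n → ℝ) := by
      funext j
      rw [Finset.sum_apply]
      have hterm : ∀ i, (w i • (Pi.single i (1:ℝ) : Fin n → ℝ)) j
          = if i = j then w i else 0 := by
        intro i
        by_cases h : i = j <;> simp [Pi.single_apply, h, eq_comm]
      rw [Finset.sum_congr rfl fun i _ => hterm i]
      simp
    conv_lhs => rw [hw]
    rw [map_sum, dot_apply]
    refine Finset.sum_congr rfl fun i _ => ?_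
    rw [map_smul, smul_eq_mul]
  have hfV : ∀ w ∈ Vx a b x, f w = 0 := by
    intro w hw
    have : (Vx a b x).mkQ w = 0 := by
      simpa [Submodule.mkQ_apply, Submodule.Quotient.mk_eq_zero] using hw
    simp [hf, this]
  have hdtight : ∀ I : Finset (Fin n), (ssum x I = b I ∨ ssum x I = a I) → ssum d I = 0 := by
    intro I hI
    have hmem : ind I ∈ Vx a b x := Submodule.subset_span ⟨I, hI, rfl⟩
    have := hfV _ hmem
    rwa [hfd, dot_ind] at this
  have hfv : f v ≠ 0 := hg
  obtain ⟨i0, hi0⟩ : ∃ i, d i ≠ 0 := by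
    by_contra h; push_neg at h
    apply hfv
    rw [hfd, dot_apply]
    exact Finset.sum_eq_zero fun i _ => by rw [h i, mul_zero]
  -- strict slack at non-orthogonal constraints
  have hub : ∀ I, ssum d I ≠ 0 → ssum x I < b I :=
    fun I h => lt_of_le_of_ne (hx I).2 fun he => h (hdtight I (Or.inl he))
  have hlb : ∀ I, ssum d I ≠ 0 → a I < ssum x I :=
    fun I h => lt_of_le_of_ne' (hx I).1 fun he => h (hdtight I (Or.inr he))
  set T : Finset (Finset (Fin n) × Bool) :=
    Finset.univ.filter (fun p => if p.2 then 0 < ssum d p.1 else ssum d p.1 < 0) with hT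
  set ρ : Finset (Fin n) × Bool → ℝ := fun p =>
    if p.2 then (b p.1 - ssum x p.1) / ssum d p.1 else (a p.1 - ssum x p.1) / ssum d p.1 with hρ
  have hsing : ∀ i : Fin n, ssum d {i} = d i := fun i => Finset.sum_singleton _ _
  have hTne : T.Nonempty := by
    rcases lt_or_gt_of_ne hi0 with h | h
    · exact ⟨({i0}, false), by simp [hT, hsing, h]⟩
    · exact ⟨({i0}, true), by simp [hT, hsing, h]⟩
  have hρpos : ∀ p ∈ T, 0 < ρ p := by
    rintro ⟨I, s⟩ hp
    rw [hT, Finset.mem_filter] at hp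
    cases s with
    | false =>
      simp only [if_false, Bool.false_eq_true] at hp ⊢
      have hdI : ssum d I < 0 := hp.2
      have := hlb I (ne_of_lt hdI)
      rw [hρ]
      simp only [Bool.false_eq_true, if_false]
      exact div_pos_of_neg_of_neg (by linarith) hdI
    | true =>
      simp only [if_true] at hp
      have hdI : 0 < ssum d I := hp.2
      have := hub I (ne_of_gt hdI)
      rw [hρ]
      simp only [if_true]
      exact div_pos (by linarith) hdI
  set ε := (T.image ρ).min' (hTne.image ρ) with hε
  have hεmem : ∃ p ∈ T, ρ p = ε := by
    have := (T.image ρ).min'_mem (hTne.image ρ)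
    rw [Finset.mem_image] at this
    exact this
  have hεle : ∀ p ∈ T, ε ≤ ρ p := fun p hp =>
    Finset.min'_le _ _ (Finset.mem_image_of_mem ρ hp)
  have hεpos : 0 < ε := by
    obtain ⟨p, hp, hpe⟩ := hεmem
    rw [← hpe]; exact hρpos p hp
  set x' : Fin n → ℝ := fun i => x i + ε * d i with hx'def
  have hS' : ∀ I, ssum x' I = ssum x I + ε * ssum d I := by
    intro I
    simp [hx'def, ssum, Finset.sum_add_distrib, Finset.mul_sum]
  have hx' : Feas a b x' := by
    intro I
    constructor
    · rcases lt_trichotomy (ssum d I) 0 with h | h | h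
      · have hmem : (I, false) ∈ T := by simp [hT, h]
        have h1 := hεle _ hmem
        rw [hρ] at h1
        simp only [Bool.false_eq_true, if_false] at h1
        rw [le_div_iff_of_neg h] at h1
        rw [hS']
        linarith [mul_comm ε (ssum d I)]
      · rw [hS', h, mul_zero, add_zero]; exact (hx I).1
      · have : 0 ≤ ε * ssum d I := mul_nonneg hεpos.le h.le
        rw [hS']; linarith [(hx I).1]
    · rcases lt_trichotomy (ssum d I) 0 with h | h | h
      · have : ε * ssum d I ≤ 0 := mul_nonpos_of_nonneg_of_nonpos hεpos.le h.le
        rw [hS']; linarith [(hx I).2]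
      · rw [hS', h, mul_zero, add_zero]; exact (hx I).2
      · have hmem : (I, true) ∈ T := by simp [hT, h]
        have h1 := hεle _ hmem
        rw [hρ] at h1
        simp only [if_true] at h1
        rw [le_div_iff₀ h] at h1
        rw [hS']
        linarith
  -- old tight constraints stay tight
  have hmono : Vx a b x ≤ Vx a b x' := by
    apply Submodule.span_mono
    rintro v ⟨I, hI, rfl⟩
    have h0 := hdtight I hI
    refine ⟨I, ?_, rfl⟩
    rw [hS', h0, mul_zero, add_zero]
    exact hI
  -- the new tight constraint
  obtain ⟨p0, hp0T, hp0⟩ := hεmem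
  rcases p0 with ⟨I₀, s⟩
  have hmain : (ssum x' I₀ = b I₀ ∨ ssum x' I₀ = a I₀) ∧ ssum d I₀ ≠ 0 := by
    rw [hT, Finset.mem_filter] at hp0T
    rw [hρ] at hp0
    cases s with
    | false =>
      simp only [Bool.false_eq_true, if_false] at hp0T hp0
      have hdI : ssum d I₀ < 0 := hp0T.2
      constructor
      · right
        rw [hS', ← hp0, div_mul_cancel₀ _ (ne_of_lt hdI)]
        ring
      · exact ne_of_lt hdI
    | true =>
      simp only [if_true] at hp0T hp0
      have hdI : 0 < ssum d I₀ := hp0T.2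
      constructor
      · left
        rw [hS', ← hp0, div_mul_cancel₀ _ (ne_of_gt hdI)]
        ring
      · exact ne_of_gt hdI
  have hnew : ind I₀ ∈ Vx a b x' := Submodule.subset_span ⟨I₀, hmain.1, rfl⟩
  have hnot : ind I₀ ∉ Vx a b x := by
    intro hmem
    have := hfV _ hmem
    rw [hfd, dot_ind] at this
    exact hmain.2 this
  have hlt : Vx a b x < Vx a b x' :=
    lt_of_le_of_ne hmono fun he => hnot (he ▸ hnew)
  exact ⟨x', hx', Submodule.finrank_lt_finrank_of_lt hlt⟩

lemma reach (a b : Finset (Fin n) → ℝ) (x₀ : Fin n → ℝ) (hx₀ : Feas a b x₀) :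
    ∃ y, Feas a b y ∧ Vx a b y = ⊤ := by
  suffices h : ∀ (k : ℕ) (x : Fin n → ℝ), Feas a b x →
      n ≤ Module.finrank ℝ (Vx a b x) + k → ∃ y, Feas a b y ∧ Vx a b y = ⊤ by
    exact h n x₀ hx₀ (Nat.le_add_left n _)
  intro k
  induction k with
  | zero =>
    intro x hx hk
    refine ⟨x, hx, Submodule.eq_top_of_finrank_eq ?_⟩
    rw [Module.finrank_fin_fun]
    have := Submodule.finrank_le (Vx a b x)
    rw [Module.finrank_fin_fun] at this
    omega
  | succ k ih =>
    intro x hx hk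
    by_cases htop : Vx a b x = ⊤
    · exact ⟨x, hx, htop⟩
    · obtain ⟨x', hx', hlt⟩ := improve a b x hx htop
      exact ih x' hx' (by omega)


/-! ### Lattice families and atoms -/

lemma inf_mem_of {T : Finset (Finset (Fin n))} (hu : Finset.univ ∈ T)
    (hc : ∀ I ∈ T, ∀ J ∈ T, I ∩ J ∈ T) (s : Finset (Finset (Fin n)))
    (hs : ∀ I ∈ s, I ∈ T) : s.inf id ∈ T := by
  induction s using Finset.induction_on with
  | empty => simpa [Finset.inf_empty, Finset.top_eq_univ] using hu
  | insert A s' h ihs =>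
    rw [Finset.inf_insert]
    have hA : A ∈ T := hs A (Finset.mem_insert_self _ _)
    have hrest : s'.inf id ∈ T := ihs fun I hI => hs I (Finset.mem_insert_of_mem hI)
    have : (id A ⊓ s'.inf id) = A ∩ s'.inf id := rfl
    rw [this]
    exact hc _ hA _ hrest

lemma sup_mem_of {T : Finset (Finset (Fin n))} (he : (∅ : Finset (Fin n)) ∈ T)
    (hc : ∀ I ∈ T, ∀ J ∈ T, I ∪ J ∈ T) (s : Finset (Finset (Fin n)))
    (hs : ∀ I ∈ s, I ∈ T) : s.sup id ∈ T := by
  induction s using Finset.induction_on with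
  | empty => simpa [Finset.sup_empty, Finset.bot_eq_empty] using he
  | insert A s' h ihs =>
    rw [Finset.sup_insert]
    have hA : A ∈ T := hs A (Finset.mem_insert_self _ _)
    have hrest : s'.sup id ∈ T := ihs fun I hI => hs I (Finset.mem_insert_of_mem hI)
    have : (id A ⊔ s'.sup id) = A ∪ s'.sup id := rfl
    rw [this]
    exact hc _ hA _ hrest

lemma mem_inf_of {i : Fin n} (s : Finset (Finset (Fin n))) (hs : ∀ I ∈ s, i ∈ I) :
    i ∈ s.inf id := by
  induction s using Finset.induction_on with
  | empty => simp [Finset.inf_empty, Finset.top_eq_univ]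
  | insert A s' h ihs =>
    rw [Finset.inf_insert]
    have : (id A ⊓ s'.inf id) = A ∩ s'.inf id := rfl
    rw [this, Finset.mem_inter]
    exact ⟨hs A (Finset.mem_insert_self _ _),
      ihs fun I hI => hs I (Finset.mem_insert_of_mem hI)⟩

/-- The minimal set of the family `T` containing `i`. -/
def famA (T : Finset (Finset (Fin n))) (i : Fin n) : Finset (Fin n) :=
  (T.filter fun I => i ∈ I).inf id

/-- The union of the sets of the family `T` not containing `i`. -/
def famU (T : Finset (Finset (Fin n))) (i : Fin n) : Finset (Fin n) :=
  (T.filter fun I => i ∉ I).sup id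

/-- The atom of `i` in the partition generated by the family `T`. -/
def atomOf (T : Finset (Finset (Fin n))) (i : Fin n) : Finset (Fin n) :=
  famA T i \ famU T i

variable {T : Finset (Finset (Fin n))} {i j : Fin n}

lemma mem_famA : i ∈ famA T i :=
  mem_inf_of _ fun I hI => (Finset.mem_filter.mp hI).2

lemma not_mem_famU : i ∉ famU T i := by
  intro h
  obtain ⟨I, hI, hiI⟩ := Finset.mem_sup.mp h
  exact (Finset.mem_filter.mp hI).2 hiI

lemma famA_mem (hu : Finset.univ ∈ T) (hc : ∀ I ∈ T, ∀ J ∈ T, I ∩ J ∈ T) :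
    famA T i ∈ T :=
  inf_mem_of hu hc _ fun I hI => (Finset.mem_filter.mp hI).1

lemma famU_mem (he : (∅ : Finset (Fin n)) ∈ T) (hc : ∀ I ∈ T, ∀ J ∈ T, I ∪ J ∈ T) :
    famU T i ∈ T :=
  sup_mem_of he hc _ fun I hI => (Finset.mem_filter.mp hI).1

lemma famA_subset {I : Finset (Fin n)} (hI : I ∈ T) (hiI : i ∈ I) : famA T i ⊆ I := by
  have hm : I ∈ T.filter (fun J => i ∈ J) := Finset.mem_filter.mpr ⟨hI, hiI⟩
  exact Finset.le_iff_subset.mp (Finset.inf_le (f := id) hm)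

lemma subset_famU {I : Finset (Fin n)} (hI : I ∈ T) (hiI : i ∉ I) : I ⊆ famU T i := by
  have hm : I ∈ T.filter (fun J => i ∉ J) := Finset.mem_filter.mpr ⟨hI, hiI⟩
  exact Finset.le_iff_subset.mp (Finset.le_sup (f := id) hm)

lemma mem_atomOf_self : i ∈ atomOf T i :=
  Finset.mem_sdiff.mpr ⟨mem_famA, not_mem_famU⟩

lemma atomOf_subset {I : Finset (Fin n)} (hI : I ∈ T) (hiI : i ∈ I) : atomOf T i ⊆ I :=
  (Finset.sdiff_subset).trans (famA_subset hI hiI)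

lemma mem_iff_of_mem_atom (hj : j ∈ atomOf T i) :
    ∀ I ∈ T, (i ∈ I ↔ j ∈ I) := by
  obtain ⟨hjA, hjU⟩ := Finset.mem_sdiff.mp hj
  intro I hI
  constructor
  · intro hiI
    exact famA_subset hI hiI hjA
  · intro hjI
    by_contra hiI
    exact hjU (subset_famU hI hiI hjI)

lemma atomOf_eq (hj : j ∈ atomOf T i) : atomOf T j = atomOf T i := by
  have hiff := mem_iff_of_mem_atom hj
  have h1 : T.filter (fun I => j ∈ I) = T.filter (fun I => i ∈ I) :=
    Finset.filter_congr fun I hI => (hiff I hI).symm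
  have h2 : T.filter (fun I => j ∉ I) = T.filter (fun I => i ∉ I) :=
    Finset.filter_congr fun I hI => not_congr (hiff I hI).symm
  simp only [atomOf, famA, famU, h1, h2]

lemma ssum_atomOf (x : Fin n → ℝ) :
    ssum x (atomOf T i) = ssum x (famA T i) - ssum x (famA T i ∩ famU T i) := by
  have h : atomOf T i = famA T i \ (famA T i ∩ famU T i) := by
    ext k; simp only [atomOf, Finset.mem_sdiff, Finset.mem_inter]; tauto
  rw [h]
  exact Finset.sum_sdiff_eq_sub Finset.inter_subset_left

/-! ### Partitions -/

def IsPartition (P : Finset (Finset (Fin n))) (E : Finset (Fin n)) : Prop :=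
  (∀ p ∈ P, p.Nonempty) ∧ (∀ p ∈ P, ∀ q ∈ P, p ≠ q → Disjoint p q) ∧ P.biUnion id = E

lemma atoms_partition (T : Finset (Finset (Fin n))) :
    IsPartition (Finset.univ.image (atomOf T)) Finset.univ := by
  refine ⟨?_, ?_, ?_⟩
  · intro p hp
    obtain ⟨k, _, rfl⟩ := Finset.mem_image.mp hp
    exact ⟨k, mem_atomOf_self⟩
  · intro p hp q hq hne
    obtain ⟨k, _, rfl⟩ := Finset.mem_image.mp hp
    obtain ⟨l, _, rfl⟩ := Finset.mem_image.mp hq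
    rw [Finset.disjoint_left]
    intro m hm hm'
    exact hne ((atomOf_eq hm).symm.trans (atomOf_eq hm'))
  · ext k
    simp only [Finset.mem_biUnion, Finset.mem_univ, iff_true, id]
    exact ⟨atomOf T k, Finset.mem_image_of_mem _ (Finset.mem_univ k), mem_atomOf_self⟩

lemma sum_ind_partition {P : Finset (Finset (Fin n))} {E : Finset (Fin n)}
    (h : IsPartition P E) : ∑ p ∈ P, ind p = ind E := by
  funext k
  rw [Finset.sum_apply]
  by_cases hk : k ∈ E
  · obtain ⟨p₀, hp₀, hkp₀⟩ : ∃ p ∈ P, k ∈ p := by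
      rw [← h.2.2] at hk
      simpa only [Finset.mem_biUnion, id] using hk
    rw [Finset.sum_eq_single p₀]
    · simp [ind, hkp₀, hk]
    · intro q hq hne
      have hkq : k ∉ q := fun hkq =>
        (Finset.disjoint_left.mp (h.2.1 q hq p₀ hp₀ hne) hkq) hkp₀
      simp [ind, hkq]
    · intro h'; exact absurd hp₀ h'
  · have hall : ∀ p ∈ P, k ∉ p := by
      intro p hp hkp
      exact hk (h.2.2 ▸ Finset.mem_biUnion.mpr ⟨p, hp, hkp⟩)
    rw [Finset.sum_eq_zero fun p hp => by simp [ind, hall p hp]]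
    simp [ind, hk]


/-! ### Dimension counting -/

lemma card_le_finrank_span {E : Finset (Fin n)} {W : Submodule ℝ (Fin n → ℝ)}
    (h : ∀ i ∈ E, Pi.single i (1:ℝ) ∈ W) : E.card ≤ Module.finrank ℝ W := by
  classical
  have hli : LinearIndependent ℝ (fun i : {x // x ∈ E} => (Pi.single (i : Fin n) (1:ℝ) : Fin n → ℝ)) := by
    have hb := (Pi.basisFun ℝ (Fin n)).linearIndependent
    have := hb.comp (fun i : {x // x ∈ E} => (i : Fin n)) Subtype.val_injective
    convert this using 1
    funext i
    simp [Function.comp, Pi.basisFun_apply]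
  have hle : Submodule.span ℝ (Set.range fun i : {x // x ∈ E} => (Pi.single (i : Fin n) (1:ℝ) : Fin n → ℝ)) ≤ W := by
    rw [Submodule.span_le]
    rintro v ⟨i, rfl⟩
    exact h i i.2
  have h1 := finrank_span_eq_card hli
  calc E.card = Fintype.card {x // x ∈ E} := (Fintype.card_coe E).symm
    _ = Module.finrank ℝ (Submodule.span ℝ (Set.range fun i : {x // x ∈ E} => (Pi.single (i : Fin n) (1:ℝ) : Fin n → ℝ))) := h1.symm
    _ ≤ Module.finrank ℝ W := Submodule.finrank_mono hle

lemma finrank_span_finset_le (s : Finset (Fin n → ℝ)) :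
    Module.finrank ℝ (Submodule.span ℝ (s : Set (Fin n → ℝ))) ≤ s.card := by
  have := finrank_span_finset_le_card (R := ℝ) s
  simpa [Set.finrank] using this

lemma card_lt_double {E : Finset (Fin n)} (hE : E.Nonempty)
    {P₁ P₂ : Finset (Finset (Fin n))} (h1 : IsPartition P₁ E) (h2 : IsPartition P₂ E)
    (hspan : ∀ i ∈ E, Pi.single i (1:ℝ) ∈
      Submodule.span ℝ (((P₁ ∪ P₂).image ind : Finset (Fin n → ℝ)) : Set (Fin n → ℝ))) :
    E.card < P₁.card + P₂.card := by
  classical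
  set W := Submodule.span ℝ (((P₁ ∪ P₂).image ind : Finset (Fin n → ℝ)) : Set (Fin n → ℝ)) with hW
  have hlow : E.card ≤ Module.finrank ℝ W := card_le_finrank_span hspan
  by_cases hint : (P₁ ∩ P₂).Nonempty
  · have h3 : Module.finrank ℝ W ≤ ((P₁ ∪ P₂).image ind).card := finrank_span_finset_le _
    have h4 : ((P₁ ∪ P₂).image ind).card ≤ (P₁ ∪ P₂).card := Finset.card_image_le
    have h5 := Finset.card_union_add_card_inter P₁ P₂
    have h6 : 1 ≤ (P₁ ∩ P₂).card := Finset.card_pos.mpr hint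
    omega
  · -- the families are disjoint; produce a relation
    obtain ⟨i, hi⟩ := hE
    obtain ⟨R₀, hR₀, hiR₀⟩ : ∃ p ∈ P₁, i ∈ p := by
      have := h1.2.2
      rw [← this] at hi
      simpa only [Finset.mem_biUnion, id] using hi
    have hR₀u : R₀ ∈ P₁ ∪ P₂ := Finset.mem_union_left _ hR₀
    have hkey : ind R₀ ∈ Submodule.span ℝ
        ((((P₁ ∪ P₂).erase R₀).image ind : Finset (Fin n → ℝ)) : Set (Fin n → ℝ)) := by
      have h1s := sum_ind_partition h1
      have h2s := sum_ind_partition h2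
      have hrel : ind R₀ = ∑ q ∈ P₂, ind q - ∑ p ∈ P₁.erase R₀, ind p := by
        have := Finset.add_sum_erase P₁ ind hR₀
        rw [h1s] at this
        rw [h2s, ← this]
        abel
      rw [hrel]
      refine Submodule.sub_mem _ ?_ ?_
      · refine Submodule.sum_mem _ fun q hq => Submodule.subset_span ?_
        have hqne : q ≠ R₀ := by
          intro h
          exact hint ⟨R₀, Finset.mem_inter.mpr ⟨hR₀, h ▸ hq⟩⟩
        exact Finset.mem_coe.mpr (Finset.mem_image_of_mem ind
          (Finset.mem_erase.mpr ⟨hqne, Finset.mem_union_right _ hq⟩))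
      · refine Submodule.sum_mem _ fun p hp => Submodule.subset_span ?_
        obtain ⟨hpne, hp'⟩ := Finset.mem_erase.mp hp
        exact Finset.mem_coe.mpr (Finset.mem_image_of_mem ind
          (Finset.mem_erase.mpr ⟨hpne, Finset.mem_union_left _ hp'⟩))
    have hWle : W ≤ Submodule.span ℝ
        ((((P₁ ∪ P₂).erase R₀).image ind : Finset (Fin n → ℝ)) : Set (Fin n → ℝ)) := by
      rw [hW, Submodule.span_le]
      intro v hv
      obtain ⟨S, hS, rfl⟩ := Finset.mem_image.mp (Finset.mem_coe.mp hv)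
      by_cases hSR : S = R₀
      · rw [hSR]; exact hkey
      · exact Submodule.subset_span (Finset.mem_coe.mpr
          (Finset.mem_image_of_mem ind (Finset.mem_erase.mpr ⟨hSR, hS⟩)))
    have h3 : Module.finrank ℝ W ≤ (((P₁ ∪ P₂).erase R₀).image ind).card :=
      le_trans (Submodule.finrank_mono hWle) (finrank_span_finset_le _)
    have h4 : (((P₁ ∪ P₂).erase R₀).image ind).card ≤ ((P₁ ∪ P₂).erase R₀).card :=
      Finset.card_image_le
    have h5 : ((P₁ ∪ P₂).erase R₀).card < (P₁ ∪ P₂).card :=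
      Finset.card_erase_lt_of_mem hR₀u
    have h6 : (P₁ ∪ P₂).card ≤ P₁.card + P₂.card := Finset.card_union_le _ _
    omega


lemma part_erase {P : Finset (Finset (Fin n))} {E : Finset (Fin n)}
    (h : IsPartition P E) (j : Fin n) :
    IsPartition ((P.image (fun p => p.erase j)).erase ∅) (E.erase j) := by
  classical
  refine ⟨?_, ?_, ?_⟩
  · intro p hp
    obtain ⟨hpne, _⟩ := Finset.mem_erase.mp hp
    exact Finset.nonempty_of_ne_empty hpne
  · intro p hp q hq hne
    obtain ⟨_, hp'⟩ := Finset.mem_erase.mp hp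
    obtain ⟨_, hq'⟩ := Finset.mem_erase.mp hq
    obtain ⟨pa, hpa, rfl⟩ := Finset.mem_image.mp hp'
    obtain ⟨qa, hqa, rfl⟩ := Finset.mem_image.mp hq'
    have hpaqa : pa ≠ qa := fun h' => hne (by rw [h'])
    exact Finset.disjoint_of_subset_left (Finset.erase_subset _ _)
      (Finset.disjoint_of_subset_right (Finset.erase_subset _ _) (h.2.1 pa hpa qa hqa hpaqa))
  · ext k
    simp only [Finset.mem_biUnion, id]
    constructor
    · rintro ⟨p, hp, hkp⟩
      obtain ⟨_, hp'⟩ := Finset.mem_erase.mp hp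
      obtain ⟨pa, hpa, rfl⟩ := Finset.mem_image.mp hp'
      obtain ⟨hkj, hkpa⟩ := Finset.mem_erase.mp hkp
      refine Finset.mem_erase.mpr ⟨hkj, ?_⟩
      rw [← h.2.2]
      exact Finset.mem_biUnion.mpr ⟨pa, hpa, hkpa⟩
    · intro hk
      obtain ⟨hkj, hkE⟩ := Finset.mem_erase.mp hk
      rw [← h.2.2] at hkE
      obtain ⟨pa, hpa, hkpa⟩ := Finset.mem_biUnion.mp hkE
      refine ⟨pa.erase j, Finset.mem_erase.mpr ⟨?_, Finset.mem_image_of_mem _ hpa⟩,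
        Finset.mem_erase.mpr ⟨hkj, hkpa⟩⟩
      intro h0
      have hmem : k ∈ pa.erase j := Finset.mem_erase.mpr ⟨hkj, hkpa⟩
      rw [h0] at hmem
      exact absurd hmem (Finset.notMem_empty k)

lemma class_subset {P : Finset (Finset (Fin n))} {E : Finset (Fin n)}
    (h : IsPartition P E) {p : Finset (Fin n)} (hp : p ∈ P) : p ⊆ E := by
  intro k hk
  rw [← h.2.2]
  exact Finset.mem_biUnion.mpr ⟨p, hp, hk⟩

lemma lemL : ∀ (k : ℕ) (x : Fin n → ℝ) (E : Finset (Fin n))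
    (P₁ P₂ : Finset (Finset (Fin n))), E.card ≤ k →
    IsPartition P₁ E → IsPartition P₂ E →
    (∀ p ∈ P₁ ∪ P₂, ∃ m : ℤ, ssum x p = m) →
    (∀ i ∈ E, Pi.single i (1:ℝ) ∈
      Submodule.span ℝ (((P₁ ∪ P₂).image ind : Finset (Fin n → ℝ)) : Set (Fin n → ℝ))) →
    ∀ i ∈ E, ∃ m : ℤ, x i = m := by
  classical
  intro k
  induction k with
  | zero =>
    intro x E _ _ hcard _ _ _ _ i hi
    have hE : E = ∅ := Finset.card_eq_zero.mp (Nat.le_zero.mp hcard)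
    rw [hE] at hi
    exact absurd hi (Finset.notMem_empty i)
  | succ k ih =>
    intro x E P₁ P₂ hcard h1 h2 hint hspan i hi
    have hE : E.Nonempty := ⟨i, hi⟩
    -- find a singleton class
    obtain ⟨j, p₀, hp₀mem, hp₀⟩ : ∃ (j : Fin n), ∃ p₀ ∈ P₁ ∪ P₂, p₀ = {j} := by
      by_contra hno
      push_neg at hno
      have h2le : ∀ p ∈ P₁ ∪ P₂, 2 ≤ p.card := by
        intro p hp
        have hpne : p.Nonempty := by
          rcases Finset.mem_union.mp hp with h | h
          · exact h1.1 p h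
          · exact h2.1 p h
        rcases Nat.lt_or_ge p.card 2 with hlt | hge
        · interval_cases hc : p.card
          · exact absurd (Finset.card_eq_zero.mp hc ▸ hpne) (by simp)
          · obtain ⟨a, ha⟩ := Finset.card_eq_one.mp hc
            exact absurd ha (hno a p hp)
        · exact hge
      have hsum1 : 2 * P₁.card ≤ E.card := by
        have hc : E.card = ∑ p ∈ P₁, p.card := by
          rw [← h1.2.2]
          exact Finset.card_biUnion h1.2.1
        calc 2 * P₁.card = ∑ _p ∈ P₁, 2 := by
              rw [Finset.sum_const, smul_eq_mul, mul_comm]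
          _ ≤ ∑ p ∈ P₁, p.card :=
              Finset.sum_le_sum fun p hp => h2le p (Finset.mem_union_left _ hp)
          _ = E.card := hc.symm
      have hsum2 : 2 * P₂.card ≤ E.card := by
        have hc : E.card = ∑ p ∈ P₂, p.card := by
          rw [← h2.2.2]
          exact Finset.card_biUnion h2.2.1
        calc 2 * P₂.card = ∑ _p ∈ P₂, 2 := by
              rw [Finset.sum_const, smul_eq_mul, mul_comm]
          _ ≤ ∑ p ∈ P₂, p.card :=
              Finset.sum_le_sum fun p hp => h2le p (Finset.mem_union_right _ hp)
          _ = E.card := hc.symm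
      have hlt := card_lt_double hE h1 h2 hspan
      omega
    have hxj : ∃ m : ℤ, x j = m := by
      obtain ⟨m, hm⟩ := hint p₀ hp₀mem
      refine ⟨m, ?_⟩
      rw [hp₀] at hm
      simpa [ssum] using hm
    by_cases hij : i = j
    · rw [hij]; exact hxj
    have hjE : j ∈ E := by
      have hjp : j ∈ p₀ := by rw [hp₀]; exact Finset.mem_singleton_self j
      rcases Finset.mem_union.mp hp₀mem with h | h
      · exact class_subset h1 h hjp
      · exact class_subset h2 h hjp
    set E' := E.erase j with hE'
    set Q₁ := (P₁.image (fun p => p.erase j)).erase ∅ with hQ₁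
    set Q₂ := (P₂.image (fun p => p.erase j)).erase ∅ with hQ₂
    have h1' : IsPartition Q₁ E' := part_erase h1 j
    have h2' : IsPartition Q₂ E' := part_erase h2 j
    obtain ⟨mj, hmj⟩ := hxj
    -- integer class sums
    have hint' : ∀ q ∈ Q₁ ∪ Q₂, ∃ m : ℤ, ssum x q = m := by
      intro q hq
      have hq' : (∃ p ∈ P₁, p.erase j = q) ∨ (∃ p ∈ P₂, p.erase j = q) := by
        rcases Finset.mem_union.mp hq with h | h
        · left
          obtain ⟨_, h'⟩ := Finset.mem_erase.mp h
          obtain ⟨pa, hpa, hpa'⟩ := Finset.mem_image.mp h'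
          exact ⟨pa, hpa, hpa'⟩
        · right
          obtain ⟨_, h'⟩ := Finset.mem_erase.mp h
          obtain ⟨pa, hpa, hpa'⟩ := Finset.mem_image.mp h'
          exact ⟨pa, hpa, hpa'⟩
      have : ∃ p ∈ P₁ ∪ P₂, p.erase j = q := by
        rcases hq' with ⟨p, hp, hpq⟩ | ⟨p, hp, hpq⟩
        · exact ⟨p, Finset.mem_union_left _ hp, hpq⟩
        · exact ⟨p, Finset.mem_union_right _ hp, hpq⟩
      obtain ⟨p, hp, rfl⟩ := this
      obtain ⟨m, hm⟩ := hint p hp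
      by_cases hjp : j ∈ p
      · refine ⟨m - mj, ?_⟩
        have := Finset.add_sum_erase p x hjp
        have hsum : ssum x (p.erase j) = ssum x p - x j := by
          simp only [ssum]
          linarith [Finset.add_sum_erase p x hjp]
        rw [hsum, hm, hmj]
        push_cast
        ring
      · rw [Finset.erase_eq_of_notMem hjp]
        exact ⟨m, hm⟩
    -- spanning
    have hspan' : ∀ i' ∈ E', Pi.single i' (1:ℝ) ∈
        Submodule.span ℝ (((Q₁ ∪ Q₂).image ind : Finset (Fin n → ℝ)) : Set (Fin n → ℝ)) := by
      set WN := Submodule.span ℝ (((Q₁ ∪ Q₂).image ind : Finset (Fin n → ℝ)) : Set (Fin n → ℝ)) with hWN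
      have hgen : ∀ S ∈ P₁ ∪ P₂, ind S ∈ WN ⊔ (ℝ ∙ (Pi.single j (1:ℝ) : Fin n → ℝ)) := by
        intro S hS
        have hid : ind S = ind (S.erase j) +
            (if j ∈ S then (Pi.single j (1:ℝ) : Fin n → ℝ) else 0) := by
          funext k
          by_cases hjS : j ∈ S
          · rw [if_pos hjS]
            by_cases hkj : k = j
            · subst hkj
              simp [ind, Finset.mem_erase, hjS, Pi.single_apply]
            · by_cases hkS : k ∈ S <;>
                simp [ind, Finset.mem_erase, hkj, hkS, Pi.single_apply]
          · rw [if_neg hjS]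
            by_cases hkj : k = j
            · subst hkj
              simp [ind, Finset.mem_erase, hjS]
            · by_cases hkS : k ∈ S <;>
                simp [ind, Finset.mem_erase, hkj, hkS]
        rw [hid]
        refine Submodule.add_mem _ ?_ ?_
        · apply Submodule.mem_sup_left
          by_cases h0 : S.erase j = ∅
          · rw [h0]
            have : ind (∅ : Finset (Fin n)) = 0 := by funext k; simp [ind]
            rw [this]
            exact Submodule.zero_mem _
          · apply Submodule.subset_span
            apply Finset.mem_coe.mpr
            apply Finset.mem_image_of_mem
            rcases Finset.mem_union.mp hS with h | h
            · exact Finset.mem_union_left _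
                (Finset.mem_erase.mpr ⟨h0, Finset.mem_image_of_mem _ h⟩)
            · exact Finset.mem_union_right _
                (Finset.mem_erase.mpr ⟨h0, Finset.mem_image_of_mem _ h⟩)
        · by_cases hjS : j ∈ S
          · rw [if_pos hjS]
            exact Submodule.mem_sup_right (Submodule.mem_span_singleton.mpr ⟨1, one_smul _ _⟩)
          · rw [if_neg hjS]
            exact Submodule.zero_mem _
      intro i' hi'
      obtain ⟨hi'j, hi'E⟩ := Finset.mem_erase.mp hi'
      have hold := hspan i' hi'E
      have hle : Submodule.span ℝ (((P₁ ∪ P₂).image ind : Finset (Fin n → ℝ)) : Set (Fin n → ℝ))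
          ≤ WN ⊔ (ℝ ∙ (Pi.single j (1:ℝ) : Fin n → ℝ)) := by
        rw [Submodule.span_le]
        intro v hv
        obtain ⟨S, hS, rfl⟩ := Finset.mem_image.mp (Finset.mem_coe.mp hv)
        exact hgen S hS
      have hmem := hle hold
      obtain ⟨w, hw, u, hu, hwu⟩ := Submodule.mem_sup.mp hmem
      obtain ⟨c, rfl⟩ := Submodule.mem_span_singleton.mp hu
      have hwj : w j = 0 := by
        have hker : WN ≤ LinearMap.ker (LinearMap.proj j : (Fin n → ℝ) →ₗ[ℝ] ℝ) := by
          rw [hWN, Submodule.span_le]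
          intro v hv
          obtain ⟨S, hS, rfl⟩ := Finset.mem_image.mp (Finset.mem_coe.mp hv)
          have hjS : j ∉ S := by
            rcases Finset.mem_union.mp hS with h | h
            · obtain ⟨_, h'⟩ := Finset.mem_erase.mp h
              obtain ⟨pa, _, rfl⟩ := Finset.mem_image.mp h'
              exact Finset.notMem_erase j pa
            · obtain ⟨_, h'⟩ := Finset.mem_erase.mp h
              obtain ⟨pa, _, rfl⟩ := Finset.mem_image.mp h'
              exact Finset.notMem_erase j pa
          simp [LinearMap.mem_ker, LinearMap.proj, ind, hjS]
        exact hker hw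
      have hcj : c = 0 := by
        have h := congrFun hwu j
        rw [Pi.add_apply, hwj, zero_add, Pi.smul_apply, Pi.single_eq_same, smul_eq_mul,
          mul_one] at h
        rw [h]
        exact Pi.single_eq_of_ne (Ne.symm hi'j) 1
      rw [hcj, zero_smul, add_zero] at hwu
      rw [← hwu]
      exact hw
    have hcard' : E'.card ≤ k := by
      have h := Finset.card_erase_of_mem hjE
      rw [← hE'] at h
      have hpos : 1 ≤ E.card := Finset.card_pos.mpr hE
      omega
    exact ih x E' Q₁ Q₂ hcard' h1' h2' hint' hspan' i (Finset.mem_erase.mpr ⟨hij, hi⟩)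


theorem keyLemma (a b : Finset (Fin n) → ℝ)
    (hb : ∀ I J, b (I ∪ J) + b (I ∩ J) ≤ b I + b J)
    (ha : ∀ I J, a I + a J ≤ a (I ∪ J) + a (I ∩ J))
    (hb0 : b ∅ = 0) (ha0 : a ∅ = 0) (hab : a Finset.univ = b Finset.univ)
    (hbi : ∀ I, ∃ m : ℤ, b I = m) (hai : ∀ I, ∃ m : ℤ, a I = m)
    (x₀ : Fin n → ℝ) (hx₀ : Feas a b x₀) :
    ∃ y, Feas a b y ∧ ∀ i, ∃ m : ℤ, y i = m := by
  classical
  obtain ⟨x, hx, hV⟩ := reach a b x₀ hx₀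
  refine ⟨x, hx, ?_⟩
  set F : Finset (Finset (Fin n)) := Finset.univ.filter (fun I => ssum x I = b I) with hF
  set G : Finset (Finset (Fin n)) := Finset.univ.filter (fun I => ssum x I = a I) with hG
  have hmemF : ∀ {I}, I ∈ F ↔ ssum x I = b I := by
    intro I; rw [hF, Finset.mem_filter]; simp
  have hmemG : ∀ {I}, I ∈ G ↔ ssum x I = a I := by
    intro I; rw [hG, Finset.mem_filter]; simp
  have huF : Finset.univ ∈ F := by
    rw [hmemF]
    have h1 := (hx Finset.univ).1
    have h2 := (hx Finset.univ).2
    linarith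
  have huG : Finset.univ ∈ G := by
    rw [hmemG]
    have h1 := (hx Finset.univ).1
    have h2 := (hx Finset.univ).2
    linarith
  have heF : (∅ : Finset (Fin n)) ∈ F := by rw [hmemF, ssum_empty, hb0]
  have heG : (∅ : Finset (Fin n)) ∈ G := by rw [hmemG, ssum_empty, ha0]
  have hclF : ∀ I ∈ F, ∀ J ∈ F, I ∩ J ∈ F ∧ I ∪ J ∈ F := by
    intro I hI J hJ
    rw [hmemF] at hI hJ
    have h0 := ssum_union_inter x I J
    have h1 := (hx (I ∪ J)).2
    have h2 := (hx (I ∩ J)).2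
    have h3 := hb I J
    constructor <;> rw [hmemF] <;> linarith
  have hclG : ∀ I ∈ G, ∀ J ∈ G, I ∩ J ∈ G ∧ I ∪ J ∈ G := by
    intro I hI J hJ
    rw [hmemG] at hI hJ
    have h0 := ssum_union_inter x I J
    have h1 := (hx (I ∪ J)).1
    have h2 := (hx (I ∩ J)).1
    have h3 := ha I J
    constructor <;> rw [hmemG] <;> linarith
  have hintF : ∀ I ∈ F, ∃ m : ℤ, ssum x I = m := by
    intro I hI; rw [hmemF] at hI; rw [hI]; exact hbi I
  have hintG : ∀ I ∈ G, ∃ m : ℤ, ssum x I = m := by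
    intro I hI; rw [hmemG] at hI; rw [hI]; exact hai I
  set P₁ := Finset.univ.image (atomOf F) with hP₁
  set P₂ := Finset.univ.image (atomOf G) with hP₂
  have h1 : IsPartition P₁ Finset.univ := atoms_partition F
  have h2 : IsPartition P₂ Finset.univ := atoms_partition G
  -- integer class sums
  have hatomint : ∀ (T : Finset (Finset (Fin n))), Finset.univ ∈ T →
      (∅ : Finset (Fin n)) ∈ T → (∀ I ∈ T, ∀ J ∈ T, I ∩ J ∈ T ∧ I ∪ J ∈ T) →
      (∀ I ∈ T, ∃ m : ℤ, ssum x I = m) →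
      ∀ i : Fin n, ∃ m : ℤ, ssum x (atomOf T i) = m := by
    intro T hu he hcl hti i
    have hAmem : famA T i ∈ T := famA_mem hu (fun I hI J hJ => (hcl I hI J hJ).1)
    have hUmem : famU T i ∈ T := famU_mem he (fun I hI J hJ => (hcl I hI J hJ).2)
    have hAU : famA T i ∩ famU T i ∈ T := (hcl _ hAmem _ hUmem).1
    obtain ⟨m1, hm1⟩ := hti _ hAmem
    obtain ⟨m2, hm2⟩ := hti _ hAU
    refine ⟨m1 - m2, ?_⟩
    rw [ssum_atomOf, hm1, hm2]
    push_cast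
    ring
  have hint : ∀ p ∈ P₁ ∪ P₂, ∃ m : ℤ, ssum x p = m := by
    intro p hp
    rcases Finset.mem_union.mp hp with h | h
    · obtain ⟨i, _, rfl⟩ := Finset.mem_image.mp h
      exact hatomint F huF heF hclF hintF i
    · obtain ⟨i, _, rfl⟩ := Finset.mem_image.mp h
      exact hatomint G huG heG hclG hintG i
  -- spanning
  have hspan : ∀ i ∈ Finset.univ, Pi.single i (1:ℝ) ∈
      Submodule.span ℝ (((P₁ ∪ P₂).image ind : Finset (Fin n → ℝ)) : Set (Fin n → ℝ)) := by
    have hVle : Vx a b x ≤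
        Submodule.span ℝ (((P₁ ∪ P₂).image ind : Finset (Fin n → ℝ)) : Set (Fin n → ℝ)) := by
      rw [Vx, Submodule.span_le]
      rintro v ⟨I, hI, rfl⟩
      -- I is tight for b or for a
      have hdecomp : ∀ (T : Finset (Finset (Fin n))) (Q : Finset (Finset (Fin n))),
          Q = Finset.univ.image (atomOf T) → Q ⊆ P₁ ∪ P₂ → I ∈ T →
          ind I ∈ Submodule.span ℝ
            (((P₁ ∪ P₂).image ind : Finset (Fin n → ℝ)) : Set (Fin n → ℝ)) := by
        intro T Q hQ hQsub hIT
        have hpart : IsPartition (Q.filter (fun p => p ⊆ I)) I := by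
          subst hQ
          have hap := atoms_partition T
          refine ⟨?_, ?_, ?_⟩
          · intro p hp; exact hap.1 p (Finset.mem_of_mem_filter _ hp)
          · intro p hp q hq hne
            exact hap.2.1 p (Finset.mem_of_mem_filter _ hp) q (Finset.mem_of_mem_filter _ hq) hne
          · ext k
            simp only [Finset.mem_biUnion, id]
            constructor
            · rintro ⟨p, hp, hkp⟩
              exact (Finset.mem_filter.mp hp).2 hkp
            · intro hk
              exact ⟨atomOf T k, Finset.mem_filter.mpr
                ⟨Finset.mem_image_of_mem _ (Finset.mem_univ k), atomOf_subset hIT hk⟩,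
                mem_atomOf_self⟩
        have hsum := sum_ind_partition hpart
        rw [← hsum]
        refine Submodule.sum_mem _ fun p hp => Submodule.subset_span ?_
        exact Finset.mem_coe.mpr (Finset.mem_image_of_mem ind
          (hQsub (Finset.mem_of_mem_filter _ hp)))
      rcases hI with hI | hI
      · exact hdecomp F P₁ hP₁ Finset.subset_union_left (hmemF.mpr hI)
      · exact hdecomp G P₂ hP₂ Finset.subset_union_right (hmemG.mpr hI)
    intro i _
    have : Pi.single i (1:ℝ) ∈ Vx a b x := by rw [hV]; exact Submodule.mem_top
    exact hVle this
  intro i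
  have hcard : (Finset.univ : Finset (Fin n)).card ≤ n := by
    rw [Finset.card_fin]
  exact lemL n x Finset.univ P₁ P₂ hcard h1 h2 hint hspan i (Finset.mem_univ i)

end GPAux


theorem stmt3 {n : ℕ} (z z' : Finset (Fin n) → ℝ)
    (hz : Submodular z) (hz' : Submodular z')
    (hzint : ∀ I, ∃ m : ℤ, z I = m) (hz'int : ∀ I, ∃ m : ℤ, z' I = m) :
    (GenPerm z ∩ LatticePts n) + (GenPerm z' ∩ LatticePts n)
      = (GenPerm z + GenPerm z') ∩ LatticePts n := by
  ext t
  constructor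
  · rintro ht
    obtain ⟨p, ⟨hpG, hpL⟩, q, ⟨hqG, hqL⟩, rfl⟩ := Set.mem_add.mp ht
    refine ⟨Set.add_mem_add hpG hqG, ?_⟩
    intro i
    obtain ⟨mp, hmp⟩ := hpL i
    obtain ⟨mq, hmq⟩ := hqL i
    exact ⟨mp + mq, by rw [Pi.add_apply, hmp, hmq]; push_cast; ring⟩
  · rintro ⟨hsum, hlat⟩
    obtain ⟨p, hpG, q, hqG, hpq⟩ := Set.mem_add.mp hsum
    -- set up the sandwich system
    set a : Finset (Fin n) → ℝ := fun I => (∑ i ∈ I, t i) - z' I with haa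
    have hta : ∀ I : Finset (Fin n), ∑ i ∈ I, t i = ∑ i ∈ I, p i + ∑ i ∈ I, q i := by
      intro I
      rw [← Finset.sum_add_distrib]
      exact Finset.sum_congr rfl fun i _ => (congrFun hpq i).symm
    have htuniv : ∑ i, t i = z univ + z' univ := by
      rw [hta univ, hpG.2, hqG.2]
    have hqle : ∀ I : Finset (Fin n), ∑ i ∈ I, q i ≤ z' I := by
      intro I
      by_cases hI : I = univ
      · rw [hI, hqG.2]
      · exact hqG.1 I hI
    have hple : ∀ I : Finset (Fin n), ∑ i ∈ I, p i ≤ z I := by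
      intro I
      by_cases hI : I = univ
      · rw [hI, hpG.2]
      · exact hpG.1 I hI
    have hFeas : GPAux.Feas a z p := by
      intro I
      constructor
      · have := hqle I
        have h2 := hta I
        show (∑ i ∈ I, t i) - z' I ≤ _
        unfold GPAux.ssum
        linarith
      · exact hple I
    have hint : ∀ I : Finset (Fin n), ∃ m : ℤ, (∑ i ∈ I, t i) = m := by
      intro I
      classical
      have : ∀ i ∈ I, ∃ m : ℤ, t i = m := fun i _ => hlat i
      choose f hf using this
      refine ⟨∑ i ∈ I.attach, f i i.2, ?_⟩
      rw [← Finset.sum_attach I t]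
      push_cast
      exact Finset.sum_congr rfl fun i _ => hf i i.2
    obtain ⟨y, hy, hyint⟩ := GPAux.keyLemma a z
      (fun I J => hz.2 I J)
      (fun I J => by
        have h1 := hz'.2 I J
        have h2 := GPAux.ssum_union_inter t I J
        show ((∑ i ∈ I, t i) - z' I) + ((∑ i ∈ J, t i) - z' J) ≤ _
        unfold GPAux.ssum at h2
        simp only [haa]
        linarith)
      hz.1
      (by simp [haa, hz'.1])
      (by simp only [haa]; rw [htuniv]; ring)
      hzint
      (fun I => by
        obtain ⟨m1, hm1⟩ := hint I
        obtain ⟨m2, hm2⟩ := hz'int I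
        exact ⟨m1 - m2, by simp only [haa]; rw [hm1, hm2]; push_cast; ring⟩)
      p hFeas
    -- y is an integral point of GenPerm z, t - y of GenPerm z'
    have hyuniv : ∑ i, y i = z univ := by
      have h1 := (hy univ).1
      have h2 := (hy univ).2
      unfold GPAux.ssum at h1 h2
      simp only [haa] at h1
      rw [htuniv] at h1
      linarith
    have hyG : y ∈ GenPerm z ∩ LatticePts n := by
      refine ⟨⟨fun I _ => (hy I).2, hyuniv⟩, hyint⟩
    have htyG : t - y ∈ GenPerm z' ∩ LatticePts n := by
      refine ⟨⟨?_, ?_⟩, ?_⟩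
      · intro I _
        have h1 := (hy I).1
        unfold GPAux.ssum at h1
        simp only [haa] at h1
        have : ∑ i ∈ I, (t - y) i = (∑ i ∈ I, t i) - ∑ i ∈ I, y i := by
          rw [← Finset.sum_sub_distrib]
          exact Finset.sum_congr rfl fun i _ => rfl
        rw [this]
        linarith
      · have : ∑ i, (t - y) i = (∑ i, t i) - ∑ i, y i := by
          rw [← Finset.sum_sub_distrib]
          exact Finset.sum_congr rfl fun i _ => rfl
        rw [this, htuniv, hyuniv]
        ring
      · intro i
        obtain ⟨mt, hmt⟩ := hlat i
        obtain ⟨my, hmy⟩ := hyint i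
        exact ⟨mt - my, by rw [Pi.sub_apply, hmt, hmy]; push_cast; ring⟩
    have : y + (t - y) = t := by abel
    rw [← this]
    exact Set.add_mem_add hyG htyG
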